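/- Let ℓ ≥ 2, let S be a resolving set of the grid graph G_ℓ, and let {x,y} = {(x1,x2),(y1,y2)} (with x1 < y1) be an S-unique diagonal pair with associated vertex u such that d(x,y) > 2. Then for every j with 0 ≤ j < y1 − x1, the pair {r^j, s^j} with r^j = (x1+j, y2+j+1) and s^j = (x1+j+1, y2+j) is a diagonal pair with d(r^j,s^j) = 2 that is S-unique with associated vertex u. In particular, there exist y1 − x1 distinct S-unique diagonal pairs with associated vertex u whose elements are at distance 2. -/

import Mathlib

/-- The `a × b` grid graph on `Fin a × Fin b`: two vertices are adjacent iff they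
differ by exactly 1 in one coordinate and agree in the other (i.e. their taxicab
distance is 1). -/
def gridGraph (a b : ℕ) : SimpleGraph (Fin a × Fin b) where
  Adj x y := ((x.1 : ℕ) - y.1) + ((y.1 : ℕ) - x.1) + ((x.2 : ℕ) - y.2) + ((y.2 : ℕ) - x.2) = 1
  symm := ⟨by intro x y h; omega⟩
  loopless := ⟨by intro x h; omega⟩

/-- `S` is a resolving set of `G`. -/
def IsResolvingSet {V : Type*} (G : SimpleGraph V) (S : Set V) : Prop :=
  ∀ x y : V, x ≠ y → ∃ u ∈ S, G.dist u x ≠ G.dist u y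

/-- Taxicab distance on the grid (with truncated natural subtraction). -/
def tc {a b : ℕ} (p q : Fin a × Fin b) : ℕ :=
  ((p.1 : ℕ) - q.1) + ((q.1 : ℕ) - p.1) + ((p.2 : ℕ) - q.2) + ((q.2 : ℕ) - p.2)

lemma grid_adj_iff {a b : ℕ} (p q : Fin a × Fin b) :
    (gridGraph a b).Adj p q ↔ tc p q = 1 := Iff.rfl

lemma exists_walk_tc {a b : ℕ} : ∀ (n : ℕ) (p q : Fin a × Fin b), tc p q ≤ n →
    ∃ w : (gridGraph a b).Walk p q, w.length = tc p q := by
  intro n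
  induction n with
  | zero =>
    intro p q h
    have hpq : p = q := by
      simp only [tc] at h; ext <;> omega
    subst hpq
    exact ⟨.nil, by simp only [SimpleGraph.Walk.length_nil, tc]; omega⟩
  | succ n ih =>
    intro p q h
    by_cases h0 : tc p q = 0
    · have hpq : p = q := by simp only [tc] at h0; ext <;> omega
      subst hpq
      exact ⟨.nil, by simp only [SimpleGraph.Walk.length_nil, tc]; omega⟩
    · rcases Nat.lt_or_ge (p.1 : ℕ) q.1 with h1 | h1
      · have hb : (p.1 : ℕ) + 1 < a := by have := q.1.2; omega
        set p' : Fin a × Fin b := (⟨(p.1 : ℕ) + 1, hb⟩, p.2) with hp'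
        have e1 : (p'.1 : ℕ) = (p.1 : ℕ) + 1 := rfl
        have e2 : (p'.2 : ℕ) = (p.2 : ℕ) := rfl
        have hadj : (gridGraph a b).Adj p p' := by
          rw [grid_adj_iff]; simp only [tc, e1, e2]; omega
        have htc : tc p' q = tc p q - 1 := by simp only [tc, e1, e2]; omega
        obtain ⟨w, hw⟩ := ih p' q (by simp only [tc] at htc h ⊢; omega)
        refine ⟨.cons hadj w, ?_⟩
        simp only [SimpleGraph.Walk.length_cons, hw, htc]
        simp only [tc] at h0 ⊢; omega
      rcases Nat.lt_or_ge (q.1 : ℕ) p.1 with h2 | h2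
      · have hb : (p.1 : ℕ) - 1 < a := by have := p.1.2; omega
        set p' : Fin a × Fin b := (⟨(p.1 : ℕ) - 1, hb⟩, p.2) with hp'
        have e1 : (p'.1 : ℕ) = (p.1 : ℕ) - 1 := rfl
        have e2 : (p'.2 : ℕ) = (p.2 : ℕ) := rfl
        have hadj : (gridGraph a b).Adj p p' := by
          rw [grid_adj_iff]; simp only [tc, e1, e2]; omega
        have htc : tc p' q = tc p q - 1 := by simp only [tc, e1, e2]; omega
        obtain ⟨w, hw⟩ := ih p' q (by simp only [tc] at htc h ⊢; omega)
        refine ⟨.cons hadj w, ?_⟩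
        simp only [SimpleGraph.Walk.length_cons, hw, htc]
        simp only [tc] at h0 ⊢; omega
      rcases Nat.lt_or_ge (p.2 : ℕ) q.2 with h3 | h3
      · have hb : (p.2 : ℕ) + 1 < b := by have := q.2.2; omega
        set p' : Fin a × Fin b := (p.1, ⟨(p.2 : ℕ) + 1, hb⟩) with hp'
        have e1 : (p'.1 : ℕ) = (p.1 : ℕ) := rfl
        have e2 : (p'.2 : ℕ) = (p.2 : ℕ) + 1 := rfl
        have hadj : (gridGraph a b).Adj p p' := by
          rw [grid_adj_iff]; simp only [tc, e1, e2]; omega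
        have htc : tc p' q = tc p q - 1 := by simp only [tc, e1, e2]; omega
        obtain ⟨w, hw⟩ := ih p' q (by simp only [tc] at htc h ⊢; omega)
        refine ⟨.cons hadj w, ?_⟩
        simp only [SimpleGraph.Walk.length_cons, hw, htc]
        simp only [tc] at h0 ⊢; omega
      · have h4 : (q.2 : ℕ) < p.2 := by simp only [tc] at h0; omega
        have hb : (p.2 : ℕ) - 1 < b := by have := p.2.2; omega
        set p' : Fin a × Fin b := (p.1, ⟨(p.2 : ℕ) - 1, hb⟩) with hp'
        have e1 : (p'.1 : ℕ) = (p.1 : ℕ) := rfl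
        have e2 : (p'.2 : ℕ) = (p.2 : ℕ) - 1 := rfl
        have hadj : (gridGraph a b).Adj p p' := by
          rw [grid_adj_iff]; simp only [tc, e1, e2]; omega
        have htc : tc p' q = tc p q - 1 := by simp only [tc, e1, e2]; omega
        obtain ⟨w, hw⟩ := ih p' q (by simp only [tc] at htc h ⊢; omega)
        refine ⟨.cons hadj w, ?_⟩
        simp only [SimpleGraph.Walk.length_cons, hw, htc]
        simp only [tc] at h0 ⊢; omega

lemma walk_length_ge {a b : ℕ} {p q : Fin a × Fin b} (w : (gridGraph a b).Walk p q) :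
    tc p q ≤ w.length := by
  induction w with
  | nil => simp only [tc, SimpleGraph.Walk.length_nil]; omega
  | cons hadj w ih =>
    rw [grid_adj_iff] at hadj
    simp only [tc, SimpleGraph.Walk.length_cons] at *
    omega

/-- Distance in the grid graph equals taxicab distance. -/
lemma grid_dist_eq {a b : ℕ} (p q : Fin a × Fin b) :
    (gridGraph a b).dist p q = tc p q := by
  obtain ⟨w, hw⟩ := exists_walk_tc (tc p q) p q le_rfl
  have h1 : (gridGraph a b).dist p q ≤ tc p q := hw ▸ SimpleGraph.dist_le w
  have hr : (gridGraph a b).Reachable p q := ⟨w⟩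
  obtain ⟨w', hw'⟩ := hr.exists_walk_length_eq_dist
  have h2 := walk_length_ge w'
  omega

set_option maxHeartbeats 1000000 in
lemma key (a b x1 x2 y1 y2 j : ℕ) (hdiag : x1+x2 = y1+y2) (hlt : x1 < y1) (hj : j < y1-x1)
    (hw : (a - (x1+j)) + ((x1+j) - a) + (b - (y2+j+1)) + ((y2+j+1) - b)
        ≠ (a - (x1+j+1)) + ((x1+j+1) - a) + (b - (y2+j)) + ((y2+j) - b)) :
    (a - x1)+(x1-a)+(b-x2)+(x2-b) ≠ (a-y1)+(y1-a)+(b-y2)+(y2-b) := by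
  rcases le_or_gt a (x1+j) with h1 | h1 <;> rcases le_or_gt b (y2+j) with h2 | h2
  · exact absurd (by omega) hw
  · clear hw
    have hgoal : (a - x1)+(x1-a)+(b-x2)+(x2-b) + 2 ≤ (a-y1)+(y1-a)+(b-y2)+(y2-b) := by omega
    omega
  · clear hw
    have hgoal : (a-y1)+(y1-a)+(b-y2)+(y2-b) + 2 ≤ (a - x1)+(x1-a)+(b-x2)+(x2-b) := by omega
    omega
  · exact absurd (by omega) hw

/-- if `{x,y}` is an `S`-unique diagonal pair of the grid `G_ℓ` with
associated vertex `u` and `d(x,y) > 2`, then for every `0 ≤ j < y₁ - x₁` the pair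
`{rʲ, sʲ}` with `rʲ = (x₁+j, y₂+j+1)`, `sʲ = (x₁+j+1, y₂+j)` is a diagonal pair at
distance 2 which is `S`-unique with associated vertex `u`.  (This yields `y₁ - x₁`
distinct such pairs.) -/
theorem stmt11 (ℓ : ℕ) (hℓ : 2 ≤ ℓ) (S : Set (Fin ℓ × Fin ℓ))
    (hS : IsResolvingSet (gridGraph ℓ ℓ) S) (x y u : Fin ℓ × Fin ℓ)
    (hdiag : (x.1 : ℕ) + (x.2 : ℕ) = (y.1 : ℕ) + (y.2 : ℕ)) (hlt : (x.1 : ℕ) < (y.1 : ℕ))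
    (hdist : 2 < (gridGraph ℓ ℓ).dist x y)
    (huniq : {w : Fin ℓ × Fin ℓ |
        (gridGraph ℓ ℓ).dist w x ≠ (gridGraph ℓ ℓ).dist w y} ∩ S = {u}) :
    ∀ j : ℕ, j < (y.1 : ℕ) - (x.1 : ℕ) →
      ∃ r s : Fin ℓ × Fin ℓ,
        (r.1 : ℕ) = (x.1 : ℕ) + j ∧ (r.2 : ℕ) = (y.2 : ℕ) + j + 1 ∧
        (s.1 : ℕ) = (x.1 : ℕ) + j + 1 ∧ (s.2 : ℕ) = (y.2 : ℕ) + j ∧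
        (r.1 : ℕ) + (r.2 : ℕ) = (s.1 : ℕ) + (s.2 : ℕ) ∧ (r.1 : ℕ) < (s.1 : ℕ) ∧
        (gridGraph ℓ ℓ).dist r s = 2 ∧
        {w : Fin ℓ × Fin ℓ |
          (gridGraph ℓ ℓ).dist w r ≠ (gridGraph ℓ ℓ).dist w s} ∩ S = {u} := by
  intro j hj
  have hx1 := x.1.2
  have hx2 := x.2.2
  have hy1 := y.1.2
  have hy2 := y.2.2
  set r : Fin ℓ × Fin ℓ := (⟨(x.1 : ℕ) + j, by omega⟩, ⟨(y.2 : ℕ) + j + 1, by omega⟩) with hr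
  set s : Fin ℓ × Fin ℓ := (⟨(x.1 : ℕ) + j + 1, by omega⟩, ⟨(y.2 : ℕ) + j, by omega⟩) with hs
  have er1 : (r.1 : ℕ) = (x.1 : ℕ) + j := rfl
  have er2 : (r.2 : ℕ) = (y.2 : ℕ) + j + 1 := rfl
  have es1 : (s.1 : ℕ) = (x.1 : ℕ) + j + 1 := rfl
  have es2 : (s.2 : ℕ) = (y.2 : ℕ) + j := rfl
  -- key inclusion: every resolver of {r,s} resolves {x,y}
  have hincl : ∀ w : Fin ℓ × Fin ℓ,
      (gridGraph ℓ ℓ).dist w r ≠ (gridGraph ℓ ℓ).dist w s →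
      (gridGraph ℓ ℓ).dist w x ≠ (gridGraph ℓ ℓ).dist w y := by
    intro w hw
    rw [grid_dist_eq, grid_dist_eq] at hw ⊢
    simp only [tc, er1, er2, es1, es2] at hw ⊢
    exact key (w.1 : ℕ) (w.2 : ℕ) (x.1 : ℕ) (x.2 : ℕ) (y.1 : ℕ) (y.2 : ℕ) j
      hdiag hlt hj hw
  have hrs : r ≠ s := by
    intro h
    have : (r.1 : ℕ) = (s.1 : ℕ) := by rw [h]
    omega
  -- u is in S and resolves {r,s}
  have huS : u ∈ S := by
    have hu : u ∈ ({u} : Set (Fin ℓ × Fin ℓ)) := rfl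
    rw [← huniq] at hu
    exact hu.2
  have hures : (gridGraph ℓ ℓ).dist u r ≠ (gridGraph ℓ ℓ).dist u s := by
    obtain ⟨v, hvS, hv⟩ := hS r s hrs
    have hvmem : v ∈ {w : Fin ℓ × Fin ℓ |
        (gridGraph ℓ ℓ).dist w x ≠ (gridGraph ℓ ℓ).dist w y} ∩ S := ⟨hincl v hv, hvS⟩
    rw [huniq] at hvmem
    rwa [hvmem] at hv
  refine ⟨r, s, er1, er2, es1, es2, by omega, by omega, ?_, ?_⟩
  · rw [grid_dist_eq]
    simp only [tc, er1, er2, es1, es2]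
    omega
  · apply Set.eq_singleton_iff_unique_mem.2
    refine ⟨⟨hures, huS⟩, ?_⟩
    intro w ⟨hw1, hw2⟩
    have hwmem : w ∈ {w : Fin ℓ × Fin ℓ |
        (gridGraph ℓ ℓ).dist w x ≠ (gridGraph ℓ ℓ).dist w y} ∩ S := ⟨hincl w hw1, hw2⟩
    rw [huniq] at hwmem
    exact hwmem
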